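/- With the setup of the auxiliary chain D^{(0)} driven by an i.i.d. {1,⋆}-valued sequence with P(Z̄_i = 1) = p, if sum_{i≥0} (1-p)^{ℓ̄⁻¹(i)} < ∞, then P(ζ < ∞) < 1, i.e. the state 0 is transient for D^{(0)}. -/

import Mathlib

open scoped Classical
open MeasureTheory ProbabilityTheory

/-- `b ^ (ℓ̄⁻¹ i)` where `ℓ̄⁻¹(i) = inf{k ≥ 1 : ℓ̄(k) > i}`, with the convention
that the value is `0` when the set is empty (i.e. `ℓ̄⁻¹(i) = +∞`). -/
noncomputable def powInvBar (b : ℝ) (lbar : ℕ → ℕ) (i : ℕ) : ℝ :=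
  if _h : ∃ k, 1 ≤ k ∧ i < lbar k then b ^ sInf {k | 1 ≤ k ∧ i < lbar k} else 0

/-- Deterministic combinatorial core: if `Z̄` is `true` on `[1, M]` with
`M ≥ ℓbar 0 + 2` and the chain returns to `0`, then there is `j ≥ M` such that
`Z̄` is `false` on `(j, j + ℓ̄⁻¹(j-1)]`. -/
lemma det_lemma_stmt4 {Ω : Type*} (Zbar : ℤ → Ω → Bool)
    (ℓbar : ℕ → ℕ)
    (mbar : ℤ → Ω → ℕ)
    (hmbar : ∀ i ω, mbar i ω = sInf {k | Zbar (i - k - 1) ω = true})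
    (Lbar : ℤ → Ω → ℕ)
    (hLbar : ∀ i ω, Lbar i ω =
      if Zbar i ω then 0 else mbar i ω + 1 + ℓbar (mbar i ω))
    (D : ℕ → Ω → ℕ) (hD0 : ∀ ω, D 0 ω = 0)
    (hDrec : ∀ i ω, 1 ≤ i →
      D i ω = i - sSup {l | l < i ∧ D l ω = 0} - Lbar (i : ℤ) ω)
    (M : ℕ) (hM : ℓbar 0 + 2 ≤ M) (ω : Ω)
    (hCω : ∀ k : ℤ, 1 ≤ k → k ≤ (M : ℤ) → Zbar k ω = true)
    (hev : ∃ i, 1 ≤ i ∧ D i ω = 0) :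
    ∃ j : ℕ, M ≤ j ∧ (∃ k, 1 ≤ k ∧ j - 1 < ℓbar k) ∧
      ∀ r ∈ Finset.Icc 1 (sInf {k | 1 ≤ k ∧ j - 1 < ℓbar k}),
        Zbar ((j : ℤ) + (r : ℤ)) ω = false := by
  classical
  set i := Nat.find hev with hidef
  obtain ⟨hi1, hiD⟩ : 1 ≤ i ∧ D i ω = 0 := Nat.find_spec hev
  have hmin : ∀ l, 1 ≤ l → l < i → D l ω ≠ 0 := fun l h1 hl h0 =>
    Nat.find_min hev hl ⟨h1, h0⟩
  have hset : {l | l < i ∧ D l ω = 0} = {0} := by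
    ext l
    simp only [Set.mem_setOf_eq, Set.mem_singleton_iff]
    constructor
    · rintro ⟨hl, h0⟩
      by_contra hne
      exact hmin l (Nat.one_le_iff_ne_zero.mpr hne) hl h0
    · rintro rfl
      exact ⟨hi1, hD0 ω⟩
  have hrec := hDrec i ω hi1
  rw [hset, csSup_singleton, Nat.sub_zero] at hrec
  have hLge : i ≤ Lbar (i : ℤ) ω := by
    have h0 : i - Lbar (i : ℤ) ω = 0 := by rw [← hrec]; exact hiD
    omega
  have hZi : Zbar (i : ℤ) ω = false := by
    cases hZ : Zbar (i : ℤ) ω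
    · rfl
    · exfalso
      have := hLbar (i : ℤ) ω
      rw [if_pos hZ] at this
      omega
  have hiM : M < i := by
    by_contra h
    push_neg at h
    have := hCω (i : ℤ) (by exact_mod_cast hi1) (by exact_mod_cast h)
    rw [hZi] at this
    exact Bool.false_ne_true this
  have hLval : Lbar (i : ℤ) ω = mbar (i : ℤ) ω + 1 + ℓbar (mbar (i : ℤ) ω) := by
    rw [hLbar, if_neg (by rw [hZi]; exact Bool.false_ne_true)]
  set m := mbar (i : ℤ) ω with hm
  have hkey : i ≤ m + 1 + ℓbar m := by rw [hLval] at hLge; omega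
  have hm1 : 1 ≤ m := by
    by_contra h
    push_neg at h
    interval_cases m
    omega
  have hmZ : (m : ℤ) = sInf {k : ℤ | Zbar ((i : ℤ) - k - 1) ω = true} := by
    rw [hm, hmbar]
  have hbdd : BddBelow {k : ℤ | Zbar ((i : ℤ) - k - 1) ω = true} := by
    by_contra h
    rw [Int.csInf_of_not_bddBelow h] at hmZ
    omega
  have hmem : ((i : ℤ) - M - 1) ∈ {k : ℤ | Zbar ((i : ℤ) - k - 1) ω = true} := by
    show Zbar ((i : ℤ) - ((i : ℤ) - M - 1) - 1) ω = true
    have : (i : ℤ) - ((i : ℤ) - M - 1) - 1 = (M : ℤ) := by ring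
    rw [this]
    exact hCω M (by exact_mod_cast Nat.one_le_of_lt (by omega : 1 < M)) le_rfl
  have hmle : (m : ℤ) ≤ (i : ℤ) - M - 1 := by
    rw [hmZ]
    exact csInf_le hbdd hmem
  set j := i - m - 1 with hj
  have hjZ : (j : ℤ) = (i : ℤ) - m - 1 := by omega
  have hjM : M ≤ j := by omega
  have hℓm : j ≤ ℓbar m := by omega
  have hex : ∃ k, 1 ≤ k ∧ j - 1 < ℓbar k := ⟨m, hm1, by omega⟩
  refine ⟨j, hjM, hex, ?_⟩
  intro r hr
  rw [Finset.mem_Icc] at hr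
  obtain ⟨hr1, hrK⟩ := hr
  have hKm : sInf {k | 1 ≤ k ∧ j - 1 < ℓbar k} ≤ m := Nat.sInf_le ⟨hm1, by omega⟩
  have hrm : r ≤ m := le_trans hrK hKm
  have hlt : (m : ℤ) - r < sInf {k : ℤ | Zbar ((i : ℤ) - k - 1) ω = true} := by
    rw [← hmZ]; omega
  have hnotmem := notMem_of_lt_csInf hlt hbdd
  have hfalse : Zbar ((i : ℤ) - ((m : ℤ) - r) - 1) ω = false := by
    cases hZ : Zbar ((i : ℤ) - ((m : ℤ) - r) - 1) ω
    · rfl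
    · exact absurd hZ hnotmem
  have hidx : (j : ℤ) + (r : ℤ) = (i : ℤ) - ((m : ℤ) - r) - 1 := by omega
  rw [hidx]
  exact hfalse

/-- For the auxiliary chain `D⁽⁰⁾` driven by an i.i.d. `{1,⋆}` sequence `Z̄`
(`true` = `1`) with success probability `p`, if `∑_i (1-p)^{ℓ̄⁻¹(i)} < ∞`
then `P(ζ < ∞) < 1`, i.e. the state `0` is transient. -/
theorem stmt_4 {Ω : Type*} [MeasurableSpace Ω] (P : Measure Ω)
    [IsProbabilityMeasure P] (p : ℝ) (hp : p ∈ Set.Ioo (0 : ℝ) 1)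
    (Zbar : ℤ → Ω → Bool) (hmeas : ∀ i, Measurable (Zbar i))
    (hiid : iIndepFun Zbar P)
    (hlaw : ∀ i, P {ω | Zbar i ω = true} = ENNReal.ofReal p)
    (ℓbar : ℕ → ℕ) (hℓmono : Monotone ℓbar)
    (mbar : ℤ → Ω → ℕ)
    (hmbar : ∀ i ω, mbar i ω = sInf {k | Zbar (i - k - 1) ω = true})
    (Lbar : ℤ → Ω → ℕ)
    (hLbar : ∀ i ω, Lbar i ω =
      if Zbar i ω then 0 else mbar i ω + 1 + ℓbar (mbar i ω))
    (D : ℕ → Ω → ℕ) (hD0 : ∀ ω, D 0 ω = 0)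
    (hDrec : ∀ i ω, 1 ≤ i →
      D i ω = i - sSup {l | l < i ∧ D l ω = 0} - Lbar (i : ℤ) ω)
    (hsum : Summable (powInvBar (1 - p) ℓbar)) :
    P {ω | ∃ i, 1 ≤ i ∧ D i ω = 0} < 1 := by
  obtain ⟨hp0, hp1⟩ := hp
  have h1p : (0:ℝ) ≤ 1 - p := by linarith
  set f := powInvBar (1 - p) ℓbar with hfdef
  have hf0 : ∀ i, 0 ≤ f i := by
    intro i
    rw [hfdef, powInvBar]
    split_ifs
    · exact pow_nonneg h1p _
    · exact le_refl 0
  -- choose M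
  have htend := tendsto_sum_nat_add f
  have hevsmall : ∀ᶠ N in Filter.atTop, ∑' k, f (k + N) < 1 :=
    htend.eventually (gt_mem_nhds (by norm_num : (0:ℝ) < 1))
  obtain ⟨N0, hN0⟩ := Filter.eventually_atTop.mp hevsmall
  set M := max (N0 + 1) (ℓbar 0 + 2) with hMdef
  have hMN0 : N0 ≤ M - 1 := by omega
  have hMℓ : ℓbar 0 + 2 ≤ M := le_max_right _ _
  have hM1 : 1 ≤ M := by omega
  have hT : ∑' k, f (k + (M - 1)) < 1 := hN0 _ hMN0
  -- basic measure computations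
  have hprod : ∀ (S : Finset ℤ) (B : ℤ → Set Bool),
      P (⋂ k ∈ S, Zbar k ⁻¹' B k) = ∏ k ∈ S, P (Zbar k ⁻¹' B k) := by
    intro S B
    exact hiid.meas_biInter (fun k _ => ⟨B k, trivial, rfl⟩)
  have htrue : ∀ k, P (Zbar k ⁻¹' {true}) = ENNReal.ofReal p := fun k => hlaw k
  have hfalse : ∀ k, P (Zbar k ⁻¹' {false}) = ENNReal.ofReal (1 - p) := by
    intro k
    have hcomp : Zbar k ⁻¹' {false} = (Zbar k ⁻¹' {true})ᶜ := by
      ext ω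
      simp [Bool.not_eq_true]
    rw [hcomp, measure_compl (hmeas k trivial) (measure_ne_top _ _), measure_univ,
      htrue k, ENNReal.ofReal_sub 1 hp0.le, ENNReal.ofReal_one]
  set q : ENNReal := ENNReal.ofReal p ^ M with hqdef
  have hq0 : q ≠ 0 := pow_ne_zero _ (by simp [ENNReal.ofReal_pos.mpr hp0, ne_of_gt])
  have hqtop : q ≠ ⊤ := by
    rw [hqdef]
    exact ENNReal.pow_ne_top ENNReal.ofReal_ne_top
  have hq1 : q ≤ 1 := by
    rw [hqdef]
    exact pow_le_one₀ zero_le (ENNReal.ofReal_le_one.mpr hp1.le)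
  -- the good event C and the bad events E t
  set C : Set Ω := ⋂ k ∈ Finset.Icc (1:ℤ) (M:ℤ), Zbar k ⁻¹' {true} with hCdef
  set E : ℕ → Set Ω := fun t =>
    if h : ∃ k, 1 ≤ k ∧ t < ℓbar k then
      ⋂ r ∈ Finset.Icc 1 (sInf {k | 1 ≤ k ∧ t < ℓbar k}),
        Zbar ((t : ℤ) + 1 + (r : ℤ)) ⁻¹' {false}
    else ∅ with hEdef
  have hCmeas : MeasurableSet C :=
    Finset.measurableSet_biInter _ (fun k _ => hmeas k trivial)
  have hPC : P C = q := by
    rw [hCdef, hprod, Finset.prod_congr rfl (fun k _ => htrue k), Finset.prod_const,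
      Int.card_Icc]
    congr 1
    omega
  -- inclusion of the return event
  have hincl : {ω | ∃ i, 1 ≤ i ∧ D i ω = 0} ⊆
      Cᶜ ∪ ⋃ n : ℕ, (C ∩ E (n + (M - 1))) := by
    intro ω hω
    by_cases hωC : ω ∈ C
    · right
      have hCω : ∀ k : ℤ, 1 ≤ k → k ≤ (M : ℤ) → Zbar k ω = true := by
        intro k h1 h2
        have := Set.mem_iInter₂.mp hωC k (Finset.mem_Icc.mpr ⟨h1, h2⟩)
        exact this
      obtain ⟨j, hjM, hex, hfalseω⟩ :=
        det_lemma_stmt4 Zbar ℓbar mbar hmbar Lbar hLbar D hD0 hDrec M hMℓ ω hCω hω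
      refine Set.mem_iUnion.mpr ⟨j - M, hωC, ?_⟩
      have hidx : j - M + (M - 1) = j - 1 := by omega
      rw [hidx, hEdef]
      simp only
      rw [dif_pos (by exact_mod_cast hex)]
      refine Set.mem_iInter₂.mpr ?_
      intro r hr
      have hcast : ((j - 1 : ℕ) : ℤ) + 1 + (r : ℤ) = (j : ℤ) + (r : ℤ) := by omega
      rw [Set.mem_preimage, Set.mem_singleton_iff, hcast]
      exact hfalseω r hr
    · left
      exact hωC
  -- measure of C ∩ E t for t ≥ M - 1
  have hPCE : ∀ n : ℕ, P (C ∩ E (n + (M - 1))) = q * ENNReal.ofReal (f (n + (M - 1))) := by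
    intro n
    set t := n + (M - 1) with htdef
    have htM : M - 1 ≤ t := by omega
    by_cases h : ∃ k, 1 ≤ k ∧ t < ℓbar k
    · set K := sInf {k | 1 ≤ k ∧ t < ℓbar k} with hKdef
      have hEt : E t = ⋂ r ∈ Finset.Icc 1 K,
          Zbar ((t : ℤ) + 1 + (r : ℤ)) ⁻¹' {false} := by
        rw [hEdef]; simp only; rw [dif_pos h]
      set g : ℕ → ℤ := fun r => (t : ℤ) + 1 + (r : ℤ) with hgdef
      set S : Finset ℤ := Finset.Icc (1:ℤ) (M:ℤ) ∪ (Finset.Icc 1 K).image g with hSdef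
      set B : ℤ → Set Bool := fun k => if k ≤ (M:ℤ) then {true} else {false} with hBdef
      have himg_gt : ∀ a ∈ (Finset.Icc 1 K).image g, (M:ℤ) < a := by
        intro a ha
        obtain ⟨r, hr, rfl⟩ := Finset.mem_image.mp ha
        rw [Finset.mem_Icc] at hr
        simp only [hgdef]
        omega
      have hdisj : Disjoint (Finset.Icc (1:ℤ) (M:ℤ)) ((Finset.Icc 1 K).image g) := by
        rw [Finset.disjoint_left]
        intro a ha hb
        rw [Finset.mem_Icc] at ha
        exact absurd (himg_gt a hb) (not_lt.mpr ha.2)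
      have hinter : C ∩ E t = ⋂ k ∈ S, Zbar k ⁻¹' B k := by
        rw [hCdef, hEt, hSdef]
        ext ω
        simp only [Set.mem_inter_iff, Set.mem_iInter, Finset.mem_union, Finset.mem_image,
          Set.mem_preimage, Set.mem_singleton_iff]
        constructor
        · rintro ⟨h1, h2⟩ k hk
          rcases hk with hk | hk
          · have hkM : k ≤ (M:ℤ) := (Finset.mem_Icc.mp hk).2
            rw [hBdef]
            simp only [if_pos hkM]
            exact h1 k hk
          · obtain ⟨r, hr, rfl⟩ := hk
            have : ¬ (g r ≤ (M:ℤ)) := not_le.mpr (himg_gt _ (Finset.mem_image_of_mem g hr))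
            rw [hBdef]
            simp only [if_neg this]
            exact h2 r hr
        · intro hall
          constructor
          · intro k hk
            have := hall k (Or.inl hk)
            rw [hBdef] at this
            simp only [if_pos (Finset.mem_Icc.mp hk).2] at this
            exact this
          · intro r hr
            have := hall (g r) (Or.inr ⟨r, hr, rfl⟩)
            have hgt : ¬ (g r ≤ (M:ℤ)) :=
              not_le.mpr (himg_gt _ (Finset.mem_image_of_mem g hr))
            rw [hBdef] at this
            simp only [if_neg hgt] at this
            exact this
      have hginj : ∀ x ∈ Finset.Icc 1 K, ∀ y ∈ Finset.Icc 1 K, g x = g y → x = y := by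
        intro x _ y _ hxy
        simp only [hgdef] at hxy
        omega
      rw [hinter, hprod, hSdef, Finset.prod_union hdisj, Finset.prod_image hginj]
      have hBk1 : ∀ k ∈ Finset.Icc (1:ℤ) (M:ℤ),
          P (Zbar k ⁻¹' B k) = ENNReal.ofReal p := by
        intro k hk
        have hB : B k = {true} := by
          simp only [hBdef]
          exact if_pos (Finset.mem_Icc.mp hk).2
        rw [hB, htrue]
      have hBk2 : ∀ r ∈ Finset.Icc 1 K,
          P (Zbar (g r) ⁻¹' B (g r)) = ENNReal.ofReal (1 - p) := by
        intro r hr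
        have hgt : ¬ (g r ≤ (M:ℤ)) :=
          not_le.mpr (himg_gt _ (Finset.mem_image_of_mem g hr))
        have hB : B (g r) = {false} := by
          simp only [hBdef]
          exact if_neg hgt
        rw [hB, hfalse]
      have hprod1 : ∏ k ∈ Finset.Icc (1:ℤ) (M:ℤ), P (Zbar k ⁻¹' B k) = q := by
        rw [Finset.prod_congr rfl hBk1, Finset.prod_const, Int.card_Icc]
        congr 1
        omega
      have hprod2 : ∏ r ∈ Finset.Icc 1 K, P (Zbar (g r) ⁻¹' B (g r)) =
          ENNReal.ofReal (f t) := by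
        rw [Finset.prod_congr rfl hBk2, Finset.prod_const, Nat.card_Icc]
        have hKc : K + 1 - 1 = K := by omega
        rw [hKc, hfdef, powInvBar, dif_pos h, ← hKdef, ENNReal.ofReal_pow h1p]
      rw [hprod1, hprod2]
    · have hEt : E t = ∅ := by rw [hEdef]; simp only; rw [dif_neg h]
      have hft : f t = 0 := by rw [hfdef, powInvBar, dif_neg h]
      rw [hEt, Set.inter_empty, measure_empty, hft, ENNReal.ofReal_zero, mul_zero]
  -- put everything together
  have hbound : P {ω | ∃ i, 1 ≤ i ∧ D i ω = 0} ≤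
      (1 - q) + q * ENNReal.ofReal (∑' k, f (k + (M - 1))) := by
    calc P {ω | ∃ i, 1 ≤ i ∧ D i ω = 0}
        ≤ P (Cᶜ ∪ ⋃ n : ℕ, (C ∩ E (n + (M - 1)))) := measure_mono hincl
      _ ≤ P Cᶜ + P (⋃ n : ℕ, (C ∩ E (n + (M - 1)))) := measure_union_le _ _
      _ ≤ P Cᶜ + ∑' n : ℕ, P (C ∩ E (n + (M - 1))) := by
          gcongr
          exact measure_iUnion_le _
      _ = (1 - q) + ∑' n : ℕ, q * ENNReal.ofReal (f (n + (M - 1))) := by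
          rw [measure_compl hCmeas (measure_ne_top _ _), measure_univ, hPC]
          congr 1
          exact tsum_congr hPCE
      _ = (1 - q) + q * ENNReal.ofReal (∑' k, f (k + (M - 1))) := by
          rw [ENNReal.tsum_mul_left, ENNReal.ofReal_tsum_of_nonneg
            (fun n => hf0 _) ((summable_nat_add_iff (M - 1)).mpr hsum)]
  have hstrict : (1 - q) + q * ENNReal.ofReal (∑' k, f (k + (M - 1))) < 1 := by
    have h1 : q * ENNReal.ofReal (∑' k, f (k + (M - 1))) < q * 1 :=
      ENNReal.mul_lt_mul_right hq0 hqtop (ENNReal.ofReal_lt_one.mpr hT)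
    have h2 : (1 - q) + q * ENNReal.ofReal (∑' k, f (k + (M - 1))) < (1 - q) + q := by
      refine ENNReal.add_lt_add_left ?_ (lt_of_lt_of_le h1 (by rw [mul_one]))
      exact (lt_of_le_of_lt tsub_le_self (by simp : (1:ENNReal) < ⊤)).ne
    calc (1 - q) + q * ENNReal.ofReal (∑' k, f (k + (M - 1)))
        < (1 - q) + q := h2
      _ = 1 := tsub_add_cancel_of_le hq1
  exact lt_of_le_of_lt hbound hstrict
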